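/- Consider the designer's problem with K artificial bugs: if (v*, v_a*, q_a*) with prizes v_a* = (v_a^{1*},…,v_a^{K*}) ≥ 0 and complexities q_a* ∈ [0,1]^K attains designer payoff U by inducing equilibrium threshold c*, then there exists an alternative choice with a single artificial bug — complexity q_a^{1**} = max_k q_a^{k*} and prize v_a^{1**} = v_a^{k̃*} + Σ_{k≠k̃} v_a^{k*} P(c*; q_a^{k*}) / P(c*; q_a^{1**}) where k̃ = argmax_k q_a^{k*} — that induces the same equilibrium threshold c*, yields the same designer payoff, and satisfies the budget constraint Σ_l v^l + v_a^{1**} ≤ Σ_l v^l + Σ_k v_a^{k*}. -/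
import Mathlib


/-- It suffices to insert one artificial bug: given an equilibrium with K artificial
bugs, the single artificial bug of maximal complexity with the adjusted prize induces
the same equilibrium threshold, yields the same designer payoff, and respects the
budget. Here p = F(c*) ∈ (0,1] is the equilibrium participation probability. -/
theorem stmt_14 (n : ℕ) (hn : 1 ≤ n)
    (p : ℝ) (hp0 : 0 < p) (hp1 : p ≤ 1)
    (L K : ℕ) (hK : 1 ≤ K)
    (v w μ q : Fin L → ℝ) (va qa : Fin K → ℝ)
    (hv : ∀ l, 0 ≤ v l) (hva : ∀ k, 0 ≤ va k)
    (hμ : ∀ l, μ l ∈ Set.Ioc (0 : ℝ) 1)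
    (hq : ∀ l, q l ∈ Set.Ioc (0 : ℝ) 1)
    (hqa : ∀ k, qa k ∈ Set.Icc (0 : ℝ) 1)
    (P Φ : ℝ → ℝ)
    (hP : ∀ r, P r = 1 - (1 - r * p) ^ n)
    (hΦ : ∀ r, Φ r = P r / (n * p))
    (cstar : ℝ)
    (heq : cstar = ∑ l, v l * μ l * Φ (q l) + ∑ k, va k * Φ (qa k))
    (kt : Fin K) (hkt : ∀ k, qa k ≤ qa kt) (hqkt : 0 < qa kt) :
    ∃ va1 : ℝ,
      va1 = va kt + (∑ k ∈ Finset.univ.erase kt, va k * P (qa k)) / P (qa kt) ∧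
      0 ≤ va1 ∧
      cstar = ∑ l, v l * μ l * Φ (q l) + va1 * Φ (qa kt) ∧
      (∑ l, (w l - v l) * μ l * P (q l)) - va1 * P (qa kt) =
        (∑ l, (w l - v l) * μ l * P (q l)) - ∑ k, va k * P (qa k) ∧
      (∑ l, v l) + va1 ≤ (∑ l, v l) + ∑ k, va k := by
  -- basic facts
  have hbase : ∀ k : Fin K, 0 ≤ 1 - qa k * p ∧ 1 - qa k * p ≤ 1 := by
    intro k
    constructor
    · have : qa k * p ≤ 1 :=
        mul_le_one₀ (hqa k).2 hp0.le hp1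
      linarith
    · have : 0 ≤ qa k * p := mul_nonneg (hqa k).1 hp0.le
      linarith
  have hPnn : ∀ k : Fin K, 0 ≤ P (qa k) := by
    intro k
    rw [hP]
    have := pow_le_one₀ (n := n) (hbase k).1 (hbase k).2
    linarith
  have hPpos : 0 < P (qa kt) := by
    rw [hP]
    have h1 : 1 - qa kt * p < 1 := by
      have : 0 < qa kt * p := mul_pos hqkt hp0
      linarith
    have := pow_lt_one₀ (n := n) (hbase kt).1 h1 (by omega)
    linarith
  have hPmono : ∀ k : Fin K, P (qa k) ≤ P (qa kt) := by
    intro k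
    rw [hP, hP]
    have h1 : 1 - qa kt * p ≤ 1 - qa k * p := by
      have := mul_le_mul_of_nonneg_right (hkt k) hp0.le
      linarith
    have := pow_le_pow_left₀ (hbase kt).1 h1 n
    linarith
  set S := ∑ k ∈ Finset.univ.erase kt, va k * P (qa k) with hS
  have hSnn : 0 ≤ S :=
    Finset.sum_nonneg fun k _ => mul_nonneg (hva k) (hPnn k)
  refine ⟨va kt + S / P (qa kt), rfl, add_nonneg (hva kt) (div_nonneg hSnn hPpos.le), ?_, ?_, ?_⟩
  · -- threshold equality
    have key : (va kt + S / P (qa kt)) * P (qa kt) = ∑ k, va k * P (qa k) := by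
      rw [add_mul, div_mul_cancel₀ _ hPpos.ne']
      rw [← Finset.add_sum_erase Finset.univ (fun k => va k * P (qa k)) (Finset.mem_univ kt)]
    rw [heq]
    congr 1
    have : ∀ k : Fin K, va k * Φ (qa k) = va k * P (qa k) / (n * p) := by
      intro k; rw [hΦ, mul_div_assoc]
    simp_rw [this, hΦ, ← Finset.sum_div, ← key, mul_div_assoc]
  · -- payoff equality
    have key : (va kt + S / P (qa kt)) * P (qa kt) = ∑ k, va k * P (qa k) := by
      rw [add_mul, div_mul_cancel₀ _ hPpos.ne']
      rw [← Finset.add_sum_erase Finset.univ (fun k => va k * P (qa k)) (Finset.mem_univ kt)]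
    rw [key]
  · -- budget
    have h1 : S / P (qa kt) ≤ ∑ k ∈ Finset.univ.erase kt, va k := by
      rw [div_le_iff₀ hPpos, Finset.sum_mul]
      exact Finset.sum_le_sum fun k _ =>
        mul_le_mul_of_nonneg_left (hPmono k) (hva k)
    have h2 : va kt + S / P (qa kt) ≤ va kt + ∑ k ∈ Finset.univ.erase kt, va k := by
      linarith
    rw [Finset.add_sum_erase Finset.univ va (Finset.mem_univ kt)] at h2
    linarith
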